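/- Let N ≥ 3, λ > 0, let p satisfy 2 < p < 2N/(N−2), and set M := min{1, λN/(N−2)}. Let ε₀ > 0 and C₁ > 0 satisfy (2N/(N−2)) ε₀ < M, and let F : ℝ → ℝ be Borel measurable with |F(s)| ≤ (ε₀/2) s² + C₁ |s|^p for all s. Then there exists σ > 0 such that every nonzero continuously differentiable compactly supported function u : EuclideanSpace ℝ (Fin N) → ℝ satisfying the Pohozaev constraint (N−2) ∫_{ℝ^N} ‖∇u‖² dx = 2N ∫_{ℝ^N} (F(u) − (λ/2)u²) dx must satisfy ∫_{ℝ^N} (‖∇u‖² + u²) dx ≥ σ. -/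

import Mathlib

open MeasureTheory
open scoped NNReal ENNReal

lemma pw_bound {p q t : ℝ} (hp : 2 < p) (hpq : p < q) (ht : 0 < t) (s : ℝ) :
    |s| ^ p ≤ t ^ (p - 2) * s ^ 2 + t ^ (p - q) * |s| ^ q := by
  rcases eq_or_ne s 0 with rfl | hs
  · simp [Real.zero_rpow (by positivity : p ≠ 0)]
    positivity
  have habs : 0 < |s| := abs_pos.mpr hs
  have h2 : |s| ^ (2:ℝ) = s ^ 2 := by
    rw [show (2:ℝ) = ((2:ℕ):ℝ) by norm_num, Real.rpow_natCast, sq_abs]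
  rcases le_total |s| t with h | h
  · have h1 : |s| ^ p = |s| ^ (p - 2) * s ^ 2 := by
      rw [← h2, ← Real.rpow_add habs]; ring_nf
    have : |s| ^ (p - 2) * s ^ 2 ≤ t ^ (p - 2) * s ^ 2 := by
      have := Real.rpow_le_rpow (abs_nonneg s) h (by linarith : (0:ℝ) ≤ p - 2)
      nlinarith [sq_nonneg s]
    have hnn : 0 ≤ t ^ (p - q) * |s| ^ q := by positivity
    linarith [h1 ▸ this]
  · have h1 : |s| ^ p = |s| ^ (p - q) * |s| ^ q := by
      rw [← Real.rpow_add habs]; ring_nf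
    have : |s| ^ (p - q) * |s| ^ q ≤ t ^ (p - q) * |s| ^ q := by
      have := Real.rpow_le_rpow_of_nonpos ht h (by linarith : p - q ≤ 0)
      have hq : 0 ≤ |s| ^ q := by positivity
      nlinarith
    have hnn : 0 ≤ t ^ (p - 2) * s ^ 2 := by positivity
    linarith [h1 ▸ this]

lemma sobolev_real {N : ℕ} (hN : 3 ≤ N) :
    ∃ C : ℝ, 0 < C ∧ ∀ u : EuclideanSpace ℝ (Fin N) → ℝ,
      ContDiff ℝ 1 u → HasCompactSupport u →
      ∫ x, |u x| ^ (2 * (N:ℝ) / ((N:ℝ) - 2)) ≤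
        C * (∫ x, ‖fderiv ℝ u x‖ ^ 2) ^ ((N:ℝ) / ((N:ℝ) - 2)) := by
  have hn3 : (3:ℝ) ≤ (N:ℝ) := by exact_mod_cast hN
  have hn2 : (0:ℝ) < (N:ℝ) - 2 := by linarith
  set n : ℝ := (N:ℝ) with hn
  set q : ℝ := 2 * n / (n - 2) with hqdef
  have hq0 : 0 < q := by positivity
  have hfr : Module.finrank ℝ (EuclideanSpace ℝ (Fin N)) = N := finrank_euclideanSpace_fin
  have hp' : ((q.toNNReal : ℝ))⁻¹ = ((2:ℝ≥0):ℝ)⁻¹ -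
      ((Module.finrank ℝ (EuclideanSpace ℝ (Fin N)) : ℝ))⁻¹ := by
    rw [hfr, Real.coe_toNNReal _ hq0.le]
    push_cast
    rw [hqdef]
    field_simp
    rw [hn]; ring
  obtain ⟨CS, hSob⟩ : ∃ CS : ℝ≥0, ∀ u : EuclideanSpace ℝ (Fin N) → ℝ,
      ContDiff ℝ 1 u → HasCompactSupport u →
      eLpNorm u (q.toNNReal : ℝ≥0∞) (volume : Measure (EuclideanSpace ℝ (Fin N))) ≤
        (CS : ℝ≥0∞) * eLpNorm (fderiv ℝ u) (((2:ℝ≥0)) : ℝ≥0∞) volume :=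
    ⟨_, fun u hu h2u => eLpNorm_le_eLpNorm_fderiv_of_eq
      (volume : Measure (EuclideanSpace ℝ (Fin N))) hu h2u (p := 2) (p' := q.toNNReal)
      one_le_two (by rw [hfr]; omega) hp'⟩
  refine ⟨((CS:ℝ) + 1) ^ q, by positivity, fun u hu h2u => ?_⟩
  have hS := hSob u hu h2u
  have humem : MemLp u (q.toNNReal : ℝ≥0∞) (volume : Measure (EuclideanSpace ℝ (Fin N))) :=
    hu.continuous.memLp_of_hasCompactSupport h2u
  have hfd : ContDiff ℝ 0 (fderiv ℝ u) := (contDiff_zero.mpr (hu.continuous_fderiv one_ne_zero))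
  have hdmem : MemLp (fderiv ℝ u) ((2:ℝ≥0) : ℝ≥0∞) (volume : Measure (EuclideanSpace ℝ (Fin N))) :=
    hfd.continuous.memLp_of_hasCompactSupport (h2u.fderiv (𝕜 := ℝ))
  have hq0' : ((q.toNNReal : ℝ≥0∞)) ≠ 0 := by
    simp [Real.toNNReal_eq_zero, not_le, hq0]
  have htr : ((q.toNNReal : ℝ≥0∞)).toReal = q := by
    simp [Real.coe_toNNReal _ hq0.le]
  have htr2 : ((((2:ℝ≥0)):ℝ≥0∞)).toReal = (2:ℝ) := by simp
  rw [humem.eLpNorm_eq_integral_rpow_norm hq0' ENNReal.coe_ne_top,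
      hdmem.eLpNorm_eq_integral_rpow_norm (by norm_num) ENNReal.coe_ne_top, htr, htr2] at hS
  set Lq : ℝ := (∫ x, ‖u x‖ ^ q) ^ q⁻¹ with hLq
  set Ld : ℝ := (∫ x, ‖fderiv ℝ u x‖ ^ (2:ℝ)) ^ (2:ℝ)⁻¹ with hLd
  have hLdnn : 0 ≤ Ld := by positivity
  have hLqnn : 0 ≤ Lq := by positivity
  have hreal : Lq ≤ (CS:ℝ) * Ld := by
    rw [show ((CS:ℝ≥0∞) * ENNReal.ofReal Ld) = ENNReal.ofReal ((CS:ℝ) * Ld) by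
      rw [ENNReal.ofReal_mul CS.coe_nonneg, ENNReal.ofReal_coe_nnreal]] at hS
    exact (ENNReal.ofReal_le_ofReal_iff (by positivity)).mp hS
  have hInn : 0 ≤ ∫ x, ‖u x‖ ^ q := integral_nonneg fun x => by positivity
  have key : ∫ x, ‖u x‖ ^ q ≤ ((CS:ℝ) + 1) ^ q * Ld ^ q := by
    have h1 : Lq ^ q ≤ (((CS:ℝ) + 1) * Ld) ^ q := by
      apply Real.rpow_le_rpow hLqnn _ hq0.le
      refine hreal.trans (mul_le_mul_of_nonneg_right (by linarith) hLdnn)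
    rwa [hLq, Real.rpow_inv_rpow hInn hq0.ne',
      Real.mul_rpow (by positivity) hLdnn] at h1
  have hud : ∫ x, ‖fderiv ℝ u x‖ ^ (2:ℝ) = ∫ x, ‖fderiv ℝ u x‖ ^ 2 := by
    congr 1; funext x
    rw [show (2:ℝ) = ((2:ℕ):ℝ) by norm_num, Real.rpow_natCast]
  have hIdnn : 0 ≤ ∫ x, ‖fderiv ℝ u x‖ ^ (2:ℝ) := integral_nonneg fun x => by positivity
  have hLdq : Ld ^ q = (∫ x, ‖fderiv ℝ u x‖ ^ 2) ^ (n / (n - 2)) := by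
    rw [hLd, ← Real.rpow_mul hIdnn, hud]
    congr 1
    rw [hqdef]; field_simp
  have huabs : ∫ x, ‖u x‖ ^ q = ∫ x, |u x| ^ (2 * n / (n - 2)) := by
    rw [← hqdef]; congr 1
  rw [← huabs, ← hLdq]
  exact key

/-- The Pohozaev manifold is bounded away from `0` in `H¹`: under the subcritical growth
bound on `F`, there is `σ > 0` such that every nonzero `C¹` compactly supported `u`
satisfying the Pohozaev constraint has `H¹`-norm squared at least `σ`. -/
theorem pohozaev_manifold_away_from_zero {N : ℕ} (hN : 3 ≤ N)
    (lam : ℝ) (hlam : 0 < lam)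
    (p : ℝ) (hp : 2 < p) (hp2 : p < 2 * N / ((N : ℝ) - 2))
    (M : ℝ) (hM : M = min 1 (lam * N / ((N : ℝ) - 2)))
    (ε₀ C₁ : ℝ) (hε₀ : 0 < ε₀) (hC₁ : 0 < C₁)
    (hsmall : 2 * N / ((N : ℝ) - 2) * ε₀ < M)
    (F : ℝ → ℝ) (hFmeas : Measurable F)
    (hFbound : ∀ s : ℝ, |F s| ≤ ε₀ / 2 * s ^ 2 + C₁ * |s| ^ p) :
    ∃ σ : ℝ, 0 < σ ∧
      ∀ u : EuclideanSpace ℝ (Fin N) → ℝ,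
        ContDiff ℝ 1 u → HasCompactSupport u → u ≠ 0 →
        (((N : ℝ) - 2) * ∫ x, ‖fderiv ℝ u x‖ ^ 2 =
          2 * (N : ℝ) * ∫ x, (F (u x) - lam / 2 * (u x) ^ 2)) →
        σ ≤ ∫ x, (‖fderiv ℝ u x‖ ^ 2 + (u x) ^ 2) := by
  have hn3 : (3:ℝ) ≤ (N:ℝ) := by exact_mod_cast hN
  have hn2 : (0:ℝ) < (N:ℝ) - 2 := by linarith
  set n : ℝ := (N:ℝ) with hn
  set a : ℝ := 2 * n / (n - 2) with hadef
  have ha : 0 < a := by positivity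
  have hpq : p < a := hp2
  set κ : ℝ := M - a * ε₀ with hκdef
  have hκ : 0 < κ := by rw [hκdef]; linarith [hsmall]
  set t : ℝ := (κ / (2 * a * C₁)) ^ ((p - 2)⁻¹) with htdef
  have ht : 0 < t := by rw [htdef]; positivity
  have htp : a * C₁ * t ^ (p - 2) = κ / 2 := by
    rw [htdef, Real.rpow_inv_rpow (by positivity) (by linarith : p - 2 ≠ 0)]
    field_simp
  obtain ⟨Creal, hCpos, hCsob⟩ := sobolev_real hN
  set K : ℝ := a * C₁ * t ^ (p - a) * Creal with hKdef
  have hK : 0 < K := by rw [hKdef]; positivity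
  set e : ℝ := n / (n - 2) - 1 with hedef
  have he : 0 < e := by
    rw [hedef]
    rw [lt_sub_iff_add_lt, zero_add, lt_div_iff₀ hn2]
    linarith
  refine ⟨(κ / (2 * K)) ^ e⁻¹, by positivity, fun u hu h2u hu0 hcon => ?_⟩
  have hucont : Continuous u := hu.continuous
  have hdcont : Continuous (fderiv ℝ u) := hu.continuous_fderiv one_ne_zero
  have hI2 : Integrable (fun x => (u x) ^ 2)
      (volume : Measure (EuclideanSpace ℝ (Fin N))) := by
    have h : HasCompactSupport (fun x => (u x) ^ 2) :=
      (h2u.comp_left (g := fun s : ℝ => s ^ 2) (by simp))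
    exact (hucont.pow 2).integrable_of_hasCompactSupport h
  have hId : Integrable (fun x => ‖fderiv ℝ u x‖ ^ 2)
      (volume : Measure (EuclideanSpace ℝ (Fin N))) := by
    have h : HasCompactSupport (fun x => ‖fderiv ℝ u x‖ ^ 2) :=
      (((h2u.fderiv (𝕜 := ℝ)).norm).comp_left (g := fun s : ℝ => s ^ 2) (by simp))
    exact ((hdcont.norm).pow 2).integrable_of_hasCompactSupport h
  have hIp : Integrable (fun x => |u x| ^ p)
      (volume : Measure (EuclideanSpace ℝ (Fin N))) := by
    refine (Continuous.integrable_of_hasCompactSupport ?_ ?_)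
    · exact (hucont.abs).rpow_const (fun x => Or.inr (by linarith))
    · exact h2u.comp_left (g := fun s : ℝ => |s| ^ p)
        (by simp [Real.zero_rpow (by linarith : p ≠ 0)])
  have hIq : Integrable (fun x => |u x| ^ a)
      (volume : Measure (EuclideanSpace ℝ (Fin N))) := by
    refine (Continuous.integrable_of_hasCompactSupport ?_ ?_)
    · exact (hucont.abs).rpow_const (fun x => Or.inr (by linarith))
    · exact h2u.comp_left (g := fun s : ℝ => |s| ^ a)
        (by simp [Real.zero_rpow (by linarith : a ≠ 0)])
  have hIbound : Integrable (fun x => ε₀ / 2 * (u x) ^ 2 + C₁ * |u x| ^ p)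
      (volume : Measure (EuclideanSpace ℝ (Fin N))) :=
    (hI2.const_mul _).add (hIp.const_mul _)
  have hIF : Integrable (fun x => F (u x))
      (volume : Measure (EuclideanSpace ℝ (Fin N))) := by
    refine hIbound.mono' ((hFmeas.comp hucont.measurable).aestronglyMeasurable) ?_
    exact Filter.Eventually.of_forall fun x => by
      simpa [Real.norm_eq_abs] using hFbound (u x)
  set Id : ℝ := ∫ x, ‖fderiv ℝ u x‖ ^ 2 with hIddef
  set I2 : ℝ := ∫ x, (u x) ^ 2 with hI2def
  set Ip : ℝ := ∫ x, |u x| ^ p with hIpdef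
  set Iq : ℝ := ∫ x, |u x| ^ a with hIqdef
  set IF : ℝ := ∫ x, F (u x) with hIFdef
  have hIdnn : 0 ≤ Id := integral_nonneg fun x => by positivity
  have hI2nn : 0 ≤ I2 := integral_nonneg fun x => by positivity
  have hIpnn : 0 ≤ Ip := integral_nonneg fun x => by positivity
  have hIqnn : 0 ≤ Iq := integral_nonneg fun x => by positivity
  have hX : ∫ x, (‖fderiv ℝ u x‖ ^ 2 + (u x) ^ 2) = Id + I2 := integral_add hId hI2
  rw [hX]
  set X : ℝ := Id + I2 with hXdef
  have hXnn : 0 ≤ X := by positivity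
  -- positivity of I2
  have hI2pos : 0 < I2 := by
    rcases hI2nn.lt_or_eq with h | h
    · exact h
    · exfalso
      have h0 : (fun x => (u x) ^ 2) =ᵐ[volume] (0 : EuclideanSpace ℝ (Fin N) → ℝ) := by
        rw [← integral_eq_zero_iff_of_nonneg (fun x => by positivity) hI2]
        exact h.symm
      have : (fun x => (u x) ^ 2) = (0 : EuclideanSpace ℝ (Fin N) → ℝ) :=
        (Continuous.ae_eq_iff_eq volume (hucont.pow 2) continuous_const).mp h0
      apply hu0
      funext x
      have := congrFun this x
      simpa [pow_eq_zero_iff] using this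
  have hXpos : 0 < X := by linarith
  -- constraint rewriting
  have hsplit : ∫ x, (F (u x) - lam / 2 * (u x) ^ 2) = IF - lam / 2 * I2 := by
    rw [integral_sub hIF (hI2.const_mul _), integral_const_mul]
  rw [hsplit] at hcon
  have hIFle : IF ≤ ε₀ / 2 * I2 + C₁ * Ip := by
    have h1 : IF ≤ ∫ x, (ε₀ / 2 * (u x) ^ 2 + C₁ * |u x| ^ p) :=
      integral_mono hIF hIbound fun x => (le_abs_self _).trans (hFbound (u x))
    rwa [integral_add (hI2.const_mul _) (hIp.const_mul _),
      integral_const_mul, integral_const_mul] at h1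
  -- main chain
  have hna : (n - 2) * a = 2 * n := by rw [hadef]; field_simp
  have hM1 : M ≤ 1 := by rw [hM]; exact min_le_left _ _
  have hM2 : M * (n - 2) ≤ lam * n := by
    have h := min_le_right 1 (lam * n / (n - 2))
    rw [← hM] at h
    calc M * (n - 2) ≤ lam * n / (n - 2) * (n - 2) := mul_le_mul_of_nonneg_right h hn2.le
      _ = lam * n := by field_simp
  have hbase : (n - 2) * Id + lam * n * I2 ≤ n * ε₀ * I2 + 2 * n * C₁ * Ip := by
    have hIF2 : 2 * n * IF ≤ 2 * n * (ε₀ / 2 * I2 + C₁ * Ip) :=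
      mul_le_mul_of_nonneg_left hIFle (by positivity)
    linarith [hcon, hIF2]
  have hstep1 : (n - 2) * (M * X) ≤ (n - 2) * Id + lam * n * I2 := by
    have e1 : (n - 2) * (M * Id) ≤ (n - 2) * (1 * Id) :=
      mul_le_mul_of_nonneg_left (mul_le_mul_of_nonneg_right hM1 hIdnn) hn2.le
    have e2 : M * (n - 2) * I2 ≤ lam * n * I2 := mul_le_mul_of_nonneg_right hM2 hI2nn
    rw [hXdef]
    linarith [e1, e2]
  have hI2X : I2 ≤ X := by rw [hXdef]; linarith
  have hstep2 : (n - 2) * (M * X) ≤ (n - 2) * (a * ε₀ * X + a * C₁ * Ip) := by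
    have ha1 : (n - 2) * (a * ε₀ * X) = 2 * n * (ε₀ * X) := by
      calc (n - 2) * (a * ε₀ * X) = ((n - 2) * a) * (ε₀ * X) := by ring
        _ = 2 * n * (ε₀ * X) := by rw [hna]
    have ha2 : (n - 2) * (a * C₁ * Ip) = 2 * n * (C₁ * Ip) := by
      calc (n - 2) * (a * C₁ * Ip) = ((n - 2) * a) * (C₁ * Ip) := by ring
        _ = 2 * n * (C₁ * Ip) := by rw [hna]
    have e3 : n * ε₀ * I2 ≤ n * ε₀ * X := mul_le_mul_of_nonneg_left hI2X (by positivity)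
    have e4 : (0:ℝ) ≤ n * (ε₀ * X) := by positivity
    have expand : (n - 2) * (a * ε₀ * X + a * C₁ * Ip)
        = 2 * n * (ε₀ * X) + 2 * n * (C₁ * Ip) := by
      rw [← ha1, ← ha2]; ring
    rw [expand]
    linarith [hstep1, hbase, e3, e4]
  have hMX : M * X ≤ a * ε₀ * X + a * C₁ * Ip :=
    le_of_mul_le_mul_left hstep2 hn2
  have hκX : κ * X ≤ a * C₁ * Ip := by
    have : κ * X = M * X - a * ε₀ * X := by rw [hκdef]; ring
    linarith [hMX, this.le, this.ge]
  -- pointwise bound integrated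
  have hIple : Ip ≤ t ^ (p - 2) * I2 + t ^ (p - a) * Iq := by
    have h1 : Ip ≤ ∫ x, (t ^ (p - 2) * (u x) ^ 2 + t ^ (p - a) * |u x| ^ a) :=
      integral_mono hIp ((hI2.const_mul _).add (hIq.const_mul _))
        fun x => pw_bound hp hpq ht (u x)
    rwa [integral_add (hI2.const_mul _) (hIq.const_mul _),
      integral_const_mul, integral_const_mul] at h1
  -- Sobolev
  have hSob : Iq ≤ Creal * X ^ (e + 1) := by
    have h1 := hCsob u hu h2u
    rw [← hn] at h1
    rw [← hadef, ← hIqdef, ← hIddef] at h1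
    have h2 : Id ^ (n / (n - 2)) ≤ X ^ (n / (n - 2)) :=
      Real.rpow_le_rpow hIdnn (by rw [hXdef]; linarith) (by positivity)
    have h3 : e + 1 = n / (n - 2) := by rw [hedef]; ring
    rw [h3]
    exact h1.trans (mul_le_mul_of_nonneg_left h2 hCpos.le)
  -- combine
  have hfinal : κ / 2 * X ≤ K * X ^ (e + 1) := by
    have hscale : a * C₁ * (t ^ (p - 2) * I2 + t ^ (p - a) * Iq)
        ≤ a * C₁ * (t ^ (p - 2) * I2) + a * C₁ * (t ^ (p - a) * (Creal * X ^ (e + 1))) := by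
      have := mul_le_mul_of_nonneg_left hSob
        (by positivity : (0:ℝ) ≤ a * C₁ * t ^ (p - a))
      linarith [this]
    have hmulIple : a * C₁ * Ip ≤ a * C₁ * (t ^ (p - 2) * I2 + t ^ (p - a) * Iq) :=
      mul_le_mul_of_nonneg_left hIple (by positivity)
    have h3 : a * C₁ * (t ^ (p - 2) * I2) = κ / 2 * I2 := by
      calc a * C₁ * (t ^ (p - 2) * I2) = (a * C₁ * t ^ (p - 2)) * I2 := by ring
        _ = κ / 2 * I2 := by rw [htp]
    have h4 : a * C₁ * (t ^ (p - a) * (Creal * X ^ (e + 1))) = K * X ^ (e + 1) := by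
      rw [hKdef]; ring
    have h5 : κ / 2 * I2 ≤ κ / 2 * X := mul_le_mul_of_nonneg_left hI2X (by positivity)
    have h6 : κ * X - κ / 2 * X = κ / 2 * X := by ring
    have c1 : a * C₁ * Ip ≤ κ / 2 * I2 + K * X ^ (e + 1) := by
      rw [← h3, ← h4]
      exact hmulIple.trans hscale
    have c2 : κ * X ≤ κ / 2 * X + K * X ^ (e + 1) :=
      hκX.trans (c1.trans (add_le_add_left h5 _))
    linarith [c2]
  have hXe2 : κ / (2 * K) ≤ X ^ e := by
    have h1 : X ^ (e + 1) = X ^ e * X := by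
      rw [Real.rpow_add hXpos, Real.rpow_one]
    rw [h1] at hfinal
    rw [div_le_iff₀ (by positivity)]
    have h2 := (mul_le_mul_iff_of_pos_right hXpos).mp (by linarith [hfinal] : κ / 2 * X ≤ (K * X ^ e) * X)
    linarith [h2]
  calc (κ / (2 * K)) ^ e⁻¹ ≤ (X ^ e) ^ e⁻¹ :=
        Real.rpow_le_rpow (by positivity) hXe2 (by positivity)
    _ = X := Real.rpow_rpow_inv hXnn he.ne'
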